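/- Main Jacobian estimate (matrix form): assume the Kalman condition holds and that R₃(τ) is invertible for every τ ∈ (0,T]. Let Hψ be a symmetric n×n matrix such that Hψ + R₃(s)⁻¹R₄(s) is positive semidefinite for every s ∈ (0,T] (as holds for the Hessian of a Kantorovich potential at a point of twice differentiability), and set N(τ) := R₃(τ)Hψ + R₄(τ) for τ ∈ [0,T] (so N(τ) is the Jacobian ∇T_τ(x) of the intermediate transport map). Then for every 0 ≤ τ ≤ s ≤ T with s > 0: det(N(τ))^{1/n} ≥ (det(R₃(τ−s))/det(R₃(−s)))^{1/n} + (det(R₃(τ))/det(R₃(s)))^{1/n} · det(N(s))^{1/n}, where both terms on the right-hand side are nonnegative and the first is strictly positive when τ < s; in particular det(N(τ)) > 0 for every τ ∈ [0,T). -/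

import Mathlib

open Matrix MeasureTheory Filter Topology

noncomputable section

namespace LQ

variable {n m : ℕ}

def Om (n : ℕ) : Matrix (Fin n ⊕ Fin n) (Fin n ⊕ Fin n) ℝ :=
  Matrix.fromBlocks 0 1 (-1) 0

def Ham (A Q : Matrix (Fin n) (Fin n) ℝ) (B : Matrix (Fin n) (Fin m) ℝ) :
    Matrix (Fin n ⊕ Fin n) (Fin n ⊕ Fin n) ℝ :=
  Matrix.fromBlocks (B * Bᵀ) A Aᵀ Q

def flow (A Q : Matrix (Fin n) (Fin n) ℝ) (B : Matrix (Fin n) (Fin m) ℝ) (τ : ℝ) :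
    Matrix (Fin n ⊕ Fin n) (Fin n ⊕ Fin n) ℝ :=
  NormedSpace.exp ((-τ) • (Om n * Ham A Q B))

def R1 (A Q : Matrix (Fin n) (Fin n) ℝ) (B : Matrix (Fin n) (Fin m) ℝ) (τ : ℝ) :
    Matrix (Fin n) (Fin n) ℝ := (flow A Q B τ).toBlocks₁₁

def R2 (A Q : Matrix (Fin n) (Fin n) ℝ) (B : Matrix (Fin n) (Fin m) ℝ) (τ : ℝ) :
    Matrix (Fin n) (Fin n) ℝ := (flow A Q B τ).toBlocks₁₂

def R3 (A Q : Matrix (Fin n) (Fin n) ℝ) (B : Matrix (Fin n) (Fin m) ℝ) (τ : ℝ) :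
    Matrix (Fin n) (Fin n) ℝ := (flow A Q B τ).toBlocks₂₁

def R4 (A Q : Matrix (Fin n) (Fin n) ℝ) (B : Matrix (Fin n) (Fin m) ℝ) (τ : ℝ) :
    Matrix (Fin n) (Fin n) ℝ := (flow A Q B τ).toBlocks₂₂

def Kalman (A : Matrix (Fin n) (Fin n) ℝ) (B : Matrix (Fin n) (Fin m) ℝ) : Prop :=
  Submodule.span ℝ
    {v : Fin n → ℝ | ∃ j : Fin n, ∃ i : Fin m, v = (A ^ (j : ℕ)).mulVec (Bᵀ i)} = ⊤



lemma psd_det_nonneg {k : ℕ} {A : Matrix (Fin k) (Fin k) ℝ} (hA : A.PosSemidef) :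
    0 ≤ A.det := by
  rw [hA.1.det_eq_prod_eigenvalues]
  exact Finset.prod_nonneg fun i _ => hA.eigenvalues_nonneg i

lemma scalar_mink {k : ℕ} (hk : 0 < k) {A : Matrix (Fin k) (Fin k) ℝ}
    (hA : A.PosSemidef) (hB : (1 - A).PosSemidef) :
    A.det ^ ((1:ℝ)/k) + (1 - A).det ^ ((1:ℝ)/k) ≤ 1 := by
  classical
  set lam := hA.1.eigenvalues with hlam
  have hl0 : ∀ i, 0 ≤ lam i := fun i => hA.eigenvalues_nonneg i
  have hl1 : ∀ i, lam i ≤ 1 := by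
    intro i
    set v : Fin k → ℝ := ⇑(hA.1.eigenvectorBasis i) with hv
    have hAv : A *ᵥ v = lam i • v := hA.1.mulVec_eigenvectorBasis i
    have hnorm : v ⬝ᵥ v = 1 := by
      have := (hA.1.eigenvectorBasis.orthonormal).1 i
      have h2 : inner (𝕜 := ℝ) (hA.1.eigenvectorBasis i) (hA.1.eigenvectorBasis i) = (1:ℝ) := by
        rw [real_inner_self_eq_norm_sq, this]; norm_num
      rw [EuclideanSpace.inner_eq_star_dotProduct] at h2
      simpa [dotProduct, mul_comm] using h2
    have hvne : v ≠ 0 := by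
      intro h
      have := hnorm
      rw [h] at this
      simp at this
    have h0 := hB.dotProduct_mulVec_nonneg v
    have : (1 - A) *ᵥ v = v - lam i • v := by
      rw [sub_mulVec, one_mulVec, hAv]
    rw [this] at h0
    simp only [star_trivial, dotProduct_sub, dotProduct_smul, smul_eq_mul, hnorm] at h0
    nlinarith
  have hdetA : A.det = ∏ i, lam i := by
    rw [hA.1.det_eq_prod_eigenvalues]; norm_num; rfl
  have hdetB : (1 - A).det = ∏ i, (1 - lam i) := by
    have hspec := hA.1.spectral_theorem
    rw [Unitary.conjStarAlgAut_apply] at hspec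
    set U : Matrix (Fin k) (Fin k) ℝ := (hA.1.eigenvectorUnitary : Matrix (Fin k) (Fin k) ℝ)
      with hU
    have hUunit : U * star U = 1 := by
      exact (Matrix.mem_unitaryGroup_iff).mp hA.1.eigenvectorUnitary.2
    have h1 : (1 : Matrix (Fin k) (Fin k) ℝ) = U * 1 * star U := by
      rw [mul_one, hUunit]
    have : 1 - A = U * (1 - diagonal (RCLike.ofReal ∘ lam)) * star U := by
      rw [Matrix.mul_sub, Matrix.sub_mul, ← hspec, mul_one, hUunit]
    rw [this]
    rw [Matrix.det_mul, Matrix.det_mul]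
    have hUU : U.det * (star U).det = 1 := by
      rw [← Matrix.det_mul, hUunit, Matrix.det_one]
    have hdiag : (1 - diagonal (RCLike.ofReal ∘ lam) : Matrix (Fin k) (Fin k) ℝ)
        = diagonal (fun i => 1 - lam i) := by
      rw [← Matrix.diagonal_one, ← Matrix.diagonal_sub]
      rfl
    rw [hdiag, Matrix.det_diagonal]
    calc U.det * (∏ x, (1 - lam x)) * (star U).det
        = (U.det * (star U).det) * ∏ x, (1 - lam x) := by ring
      _ = ∏ x, (1 - lam x) := by rw [hUU, one_mul]
  have hk' : (0:ℝ) < k := Nat.cast_pos.mpr hk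
  have hw : ∑ _i : Fin k, (1:ℝ)/k = 1 := by
    rw [Finset.sum_const]
    simp only [Finset.card_univ, Fintype.card_fin, nsmul_eq_mul]
    field_simp
  have hwn : ∀ i ∈ Finset.univ, (0:ℝ) ≤ (fun _ : Fin k => (1:ℝ)/k) i :=
    fun i _ => by positivity
  have h1 : (∏ i, lam i) ^ ((1:ℝ)/k) ≤ ∑ i, (1:ℝ)/k * lam i := by
    have h := Real.geom_mean_le_arith_mean_weighted Finset.univ
      (fun _ => (1:ℝ)/k) lam hwn hw (fun i _ => hl0 i)
    rwa [Real.finset_prod_rpow Finset.univ lam (fun i _ => hl0 i)] at h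
  have h2 : (∏ i, (1 - lam i)) ^ ((1:ℝ)/k) ≤ ∑ i, (1:ℝ)/k * (1 - lam i) := by
    have h := Real.geom_mean_le_arith_mean_weighted Finset.univ
      (fun _ => (1:ℝ)/k) (fun i => 1 - lam i) hwn hw
      (fun i _ => by simpa using sub_nonneg.2 (hl1 i))
    rwa [Real.finset_prod_rpow Finset.univ _ (fun i _ => by simpa using sub_nonneg.2 (hl1 i) : ∀ i ∈ Finset.univ, (0:ℝ) ≤ 1 - lam i)] at h
  have hsum : (∑ i, (1:ℝ)/k * lam i) + ∑ i, (1:ℝ)/k * (1 - lam i) = 1 := by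
    rw [← Finset.sum_add_distrib]
    have he : ∀ i : Fin k, (1:ℝ)/k * lam i + (1:ℝ)/k * (1 - lam i) = 1/k := by
      intro i; ring
    simp only [he]
    exact hw
  rw [hdetA, hdetB]
  linarith

open scoped MatrixOrder in
lemma minkowski_det {k : ℕ} (hk : 0 < k) {A B : Matrix (Fin k) (Fin k) ℝ}
    (hA : A.PosSemidef) (hB : B.PosSemidef) :
    A.det ^ ((1:ℝ)/k) + B.det ^ ((1:ℝ)/k) ≤ (A + B).det ^ ((1:ℝ)/k) := by
  classical
  have hexp : (1:ℝ)/k ≠ 0 := by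
    have : (0:ℝ) < k := Nat.cast_pos.mpr hk
    positivity
  have hM : (A + B).PosSemidef := hA.add hB
  by_cases hdet : (A + B).det = 0
  · have hv : ∃ v ≠ 0, (A + B) *ᵥ v = 0 := (Matrix.exists_mulVec_eq_zero_iff).mpr hdet
    obtain ⟨v, hv0, hveq⟩ := hv
    have hsum : v ⬝ᵥ (A *ᵥ v) + v ⬝ᵥ (B *ᵥ v) = 0 := by
      have : v ⬝ᵥ ((A + B) *ᵥ v) = 0 := by rw [hveq, dotProduct_zero]
      rw [Matrix.add_mulVec, dotProduct_add] at this
      exact this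
    have hAv : (0:ℝ) ≤ v ⬝ᵥ (A *ᵥ v) := by simpa using hA.dotProduct_mulVec_nonneg v
    have hBv : (0:ℝ) ≤ v ⬝ᵥ (B *ᵥ v) := by simpa using hB.dotProduct_mulVec_nonneg v
    have hA0 : A *ᵥ v = 0 := by
      have : v ⬝ᵥ (A *ᵥ v) = 0 := by linarith
      have := (hA.dotProduct_mulVec_zero_iff v).mp (by simpa using this)
      exact this
    have hB0 : B *ᵥ v = 0 := by
      have : v ⬝ᵥ (B *ᵥ v) = 0 := by linarith
      exact (hB.dotProduct_mulVec_zero_iff v).mp (by simpa using this)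
    have hdA : A.det = 0 := Matrix.exists_mulVec_eq_zero_iff.mp ⟨v, hv0, hA0⟩
    have hdB : B.det = 0 := Matrix.exists_mulVec_eq_zero_iff.mp ⟨v, hv0, hB0⟩
    rw [hdA, hdB, hdet, Real.zero_rpow hexp]
    norm_num
  · set R := CFC.sqrt (A + B) with hR
    have hRpsd : R.PosSemidef := (CFC.sqrt_nonneg (A + B)).posSemidef
    have hRR : R * R = A + B := CFC.sqrt_mul_sqrt_self (A + B) hM.nonneg
    have hdR : R.det * R.det = (A + B).det := by rw [← Matrix.det_mul, hRR]
    have hRdet : R.det ≠ 0 := by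
      intro h; rw [h, mul_zero] at hdR; exact hdet hdR.symm
    have hRunit : IsUnit R := (Matrix.isUnit_iff_isUnit_det R).mpr hRdet.isUnit
    set C := R⁻¹ with hC
    have hCR : C * R = 1 := Matrix.nonsing_inv_mul R hRdet.isUnit
    have hRC : R * C = 1 := Matrix.mul_nonsing_inv R hRdet.isUnit
    have hCherm : C.IsHermitian := (hRpsd.1.inv)
    have hA' : (C * A * C).PosSemidef := by
      have := hA.mul_mul_conjTranspose_same C
      rwa [hCherm.eq] at this
    have hB' : (C * B * C).PosSemidef := by
      have := hB.mul_mul_conjTranspose_same C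
      rwa [hCherm.eq] at this
    have hsum1 : C * A * C + C * B * C = 1 := by
      have : C * A * C + C * B * C = C * (A + B) * C := by
        noncomm_ring
      rw [this, ← hRR]
      calc C * (R * R) * C = (C * R) * (R * C) := by noncomm_ring
        _ = 1 := by rw [hCR, hRC, one_mul]
    have hone : (1 : Matrix (Fin k) (Fin k) ℝ) - C * A * C = C * B * C := by
      rw [← hsum1]; exact add_sub_cancel_left _ _
    have hscal := scalar_mink hk hA' (by rw [hone]; exact hB')
    rw [hone] at hscal
    have hdC : C.det = (R.det)⁻¹ := by
      rw [hC, Matrix.det_nonsing_inv, Ring.inverse_eq_inv']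
    have hMdet : (0:ℝ) ≤ (A+B).det := psd_det_nonneg hM
    have hdetA' : (A+B).det * (C * A * C).det = A.det := by
      rw [Matrix.det_mul, Matrix.det_mul, hdC, ← hdR]
      field_simp
    have hdetB' : (A+B).det * (C * B * C).det = B.det := by
      rw [Matrix.det_mul, Matrix.det_mul, hdC, ← hdR]
      field_simp
    have hfin : ((A+B).det * (C * A * C).det) ^ ((1:ℝ)/k)
        + ((A+B).det * (C * B * C).det) ^ ((1:ℝ)/k) ≤ (A+B).det ^ ((1:ℝ)/k) := by
      rw [Real.mul_rpow hMdet (psd_det_nonneg hA'), Real.mul_rpow hMdet (psd_det_nonneg hB'),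
        ← mul_add]
      calc (A+B).det ^ ((1:ℝ)/k) * ((C * A * C).det ^ ((1:ℝ)/k) + (C * B * C).det ^ ((1:ℝ)/k))
          ≤ (A+B).det ^ ((1:ℝ)/k) * 1 := by
            apply mul_le_mul_of_nonneg_left hscal (Real.rpow_nonneg hMdet _)
        _ = (A+B).det ^ ((1:ℝ)/k) := mul_one _
    rwa [hdetA', hdetB'] at hfin


variable (A Q : Matrix (Fin n) (Fin n) ℝ) (B : Matrix (Fin n) (Fin m) ℝ)

lemma flow_eq_fromBlocks (τ : ℝ) :
    flow A Q B τ = Matrix.fromBlocks (R1 A Q B τ) (R2 A Q B τ) (R3 A Q B τ) (R4 A Q B τ) :=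
  (Matrix.fromBlocks_toBlocks _).symm

lemma flow_zero : flow A Q B 0 = 1 := by
  rw [flow, neg_zero, zero_smul, NormedSpace.exp_zero]

lemma R3_zero : R3 A Q B 0 = 0 := by
  rw [R3, flow_zero]
  ext i j
  simp [Matrix.toBlocks₂₁, Matrix.one_apply]

lemma R4_zero : R4 A Q B 0 = 1 := by
  rw [R4, flow_zero]
  ext i j
  simp [Matrix.toBlocks₂₂, Matrix.one_apply, Sum.inr.injEq]

lemma flow_add (a b : ℝ) : flow A Q B (a + b) = flow A Q B a * flow A Q B b := by
  rw [flow, flow, flow, neg_add, add_smul]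
  exact Matrix.exp_add_of_commute _ _ (Commute.smul_left (Commute.smul_right rfl _) _)

lemma flow_mul_flow_neg (τ : ℝ) : flow A Q B τ * flow A Q B (-τ) = 1 := by
  rw [← flow_add, add_neg_cancel, flow_zero]

lemma flow_neg_mul_flow (τ : ℝ) : flow A Q B (-τ) * flow A Q B τ = 1 := by
  rw [← flow_add, neg_add_cancel, flow_zero]

lemma Om_mul_neg_Om : Om n * (-(Om n)) = 1 := by
  rw [Om, Matrix.mul_neg, Matrix.fromBlocks_multiply]
  simp only [Matrix.mul_zero, Matrix.zero_mul, Matrix.mul_one, Matrix.one_mul,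
    Matrix.mul_neg, add_zero, zero_add]
  rw [Matrix.fromBlocks_neg]
  simp only [neg_neg, neg_zero]
  exact Matrix.fromBlocks_one

lemma neg_Om_mul_Om : (-(Om n)) * Om n = 1 := by
  rw [Om, Matrix.neg_mul, Matrix.fromBlocks_multiply]
  simp only [Matrix.mul_zero, Matrix.zero_mul, Matrix.mul_one, Matrix.one_mul,
    Matrix.mul_neg, add_zero, zero_add]
  rw [Matrix.fromBlocks_neg]
  simp only [neg_neg, neg_zero]
  exact Matrix.fromBlocks_one

lemma flow_transpose (hQ : Q.IsSymm) (τ : ℝ) :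
    (flow A Q B τ)ᵀ = (-(Om n)) * flow A Q B (-τ) * Om n := by
  have hOmUnit : IsUnit (Om n) := ⟨⟨Om n, -(Om n), Om_mul_neg_Om, neg_Om_mul_Om⟩, rfl⟩
  have hOminv : (Om n)⁻¹ = -(Om n) := Matrix.inv_eq_right_inv (Om_mul_neg_Om)
  have hHam : (Ham A Q B)ᵀ = Ham A Q B := by
    rw [Ham, Matrix.fromBlocks_transpose, Matrix.transpose_mul, Matrix.transpose_transpose,
      Matrix.transpose_transpose, hQ.eq]
  have hOmT : (Om n)ᵀ = -(Om n) := by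
    rw [Om, Matrix.fromBlocks_transpose, Matrix.fromBlocks_neg]
    congr 1 <;> simp
  calc (flow A Q B τ)ᵀ
      = NormedSpace.exp (((-τ) • (Om n * Ham A Q B))ᵀ) := (Matrix.exp_transpose _).symm
    _ = NormedSpace.exp ((Om n)⁻¹ * ((-(-τ)) • (Om n * Ham A Q B)) * Om n) := by
        congr 1
        rw [Matrix.transpose_smul, Matrix.transpose_mul, hHam, hOmT, hOminv]
        rw [Matrix.mul_smul, Matrix.smul_mul]
        have h5 : (-(Om n)) * (Om n * Ham A Q B) * Om n = Ham A Q B * Om n := by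
          rw [← Matrix.mul_assoc, neg_Om_mul_Om, Matrix.one_mul]
        rw [h5, Matrix.mul_neg, smul_neg, neg_smul, neg_neg, neg_neg]
    _ = (Om n)⁻¹ * NormedSpace.exp ((-(-τ)) • (Om n * Ham A Q B)) * Om n :=
        Matrix.exp_conj' _ _ hOmUnit
    _ = (-(Om n)) * flow A Q B (-τ) * Om n := by rw [hOminv, flow]

lemma flow_transpose_blocks (hQ : Q.IsSymm) (τ : ℝ) :
    Matrix.fromBlocks (R1 A Q B τ)ᵀ (R3 A Q B τ)ᵀ (R2 A Q B τ)ᵀ (R4 A Q B τ)ᵀ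
      = Matrix.fromBlocks (R4 A Q B (-τ)) (-(R3 A Q B (-τ)))
          (-(R2 A Q B (-τ))) (R1 A Q B (-τ)) := by
  have h := flow_transpose A Q B hQ τ
  rw [flow_eq_fromBlocks A Q B τ, flow_eq_fromBlocks A Q B (-τ)] at h
  rw [Matrix.fromBlocks_transpose] at h
  rw [Om] at h
  have hneg : -(Matrix.fromBlocks (0:Matrix (Fin n) (Fin n) ℝ) 1 (-1) 0)
      = Matrix.fromBlocks (0:Matrix (Fin n) (Fin n) ℝ) (-1 : Matrix (Fin n) (Fin n) ℝ)
          (1 : Matrix (Fin n) (Fin n) ℝ) (0:Matrix (Fin n) (Fin n) ℝ) := by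
    rw [Matrix.fromBlocks_neg]; congr 1 <;> simp
  rw [hneg, Matrix.fromBlocks_multiply, Matrix.fromBlocks_multiply] at h
  simpa using h

lemma R1_transpose (hQ : Q.IsSymm) (τ : ℝ) : (R1 A Q B τ)ᵀ = R4 A Q B (-τ) := by
  have h := congrArg Matrix.toBlocks₁₁ (flow_transpose_blocks A Q B hQ τ)
  simpa [Matrix.toBlocks_fromBlocks₁₁] using h

lemma R2_transpose (hQ : Q.IsSymm) (τ : ℝ) : (R2 A Q B τ)ᵀ = -(R2 A Q B (-τ)) := by
  have h := congrArg Matrix.toBlocks₂₁ (flow_transpose_blocks A Q B hQ τ)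
  simpa [Matrix.toBlocks_fromBlocks₂₁] using h

lemma R3_transpose (hQ : Q.IsSymm) (τ : ℝ) : (R3 A Q B τ)ᵀ = -(R3 A Q B (-τ)) := by
  have h := congrArg Matrix.toBlocks₁₂ (flow_transpose_blocks A Q B hQ τ)
  simpa [Matrix.toBlocks_fromBlocks₁₂] using h

lemma R4_transpose (hQ : Q.IsSymm) (τ : ℝ) : (R4 A Q B τ)ᵀ = R1 A Q B (-τ) := by
  have h := congrArg Matrix.toBlocks₂₂ (flow_transpose_blocks A Q B hQ τ)
  simpa [Matrix.toBlocks_fromBlocks₂₂] using h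

lemma flow_neg_mul_blocks (τ : ℝ) :
    Matrix.fromBlocks
      (R1 A Q B (-τ) * R1 A Q B τ + R2 A Q B (-τ) * R3 A Q B τ)
      (R1 A Q B (-τ) * R2 A Q B τ + R2 A Q B (-τ) * R4 A Q B τ)
      (R3 A Q B (-τ) * R1 A Q B τ + R4 A Q B (-τ) * R3 A Q B τ)
      (R3 A Q B (-τ) * R2 A Q B τ + R4 A Q B (-τ) * R4 A Q B τ)
      = (1 : Matrix (Fin n ⊕ Fin n) (Fin n ⊕ Fin n) ℝ) := by
  have h := flow_neg_mul_flow A Q B τ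
  rw [flow_eq_fromBlocks A Q B τ, flow_eq_fromBlocks A Q B (-τ),
    Matrix.fromBlocks_multiply] at h
  exact h

lemma sympl_one (hQ : Q.IsSymm) (τ : ℝ) :
    (R1 A Q B τ)ᵀ * R4 A Q B τ - (R3 A Q B τ)ᵀ * R2 A Q B τ = 1 := by
  have h := congrArg Matrix.toBlocks₂₂ (flow_neg_mul_blocks A Q B τ)
  rw [Matrix.toBlocks_fromBlocks₂₂] at h
  rw [R1_transpose A Q B hQ, R3_transpose A Q B hQ]
  have h1 : (1 : Matrix (Fin n ⊕ Fin n) (Fin n ⊕ Fin n) ℝ).toBlocks₂₂ = 1 := by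
    ext i j; simp [Matrix.toBlocks₂₂, Matrix.one_apply, Sum.inr.injEq]
  rw [h1] at h
  rw [← h]
  noncomm_ring

lemma sympl_two (hQ : Q.IsSymm) (τ : ℝ) :
    (R1 A Q B τ)ᵀ * R3 A Q B τ = (R3 A Q B τ)ᵀ * R1 A Q B τ := by
  have h := congrArg Matrix.toBlocks₂₁ (flow_neg_mul_blocks A Q B τ)
  rw [Matrix.toBlocks_fromBlocks₂₁] at h
  have h1 : (1 : Matrix (Fin n ⊕ Fin n) (Fin n ⊕ Fin n) ℝ).toBlocks₂₁ = 0 := by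
    ext i j; simp [Matrix.toBlocks₂₁, Matrix.one_apply]
  rw [h1] at h
  have h2 : R3 A Q B (-τ) = -(R3 A Q B τ)ᵀ := by
    rw [R3_transpose A Q B hQ, neg_neg]
  have h3 : R4 A Q B (-τ) = (R1 A Q B τ)ᵀ := (R1_transpose A Q B hQ τ).symm
  rw [h2, h3, Matrix.neg_mul, neg_add_eq_sub, sub_eq_zero] at h
  exact h

lemma sympl_three (hQ : Q.IsSymm) (τ : ℝ) :
    R3 A Q B τ * (R4 A Q B τ)ᵀ = R4 A Q B τ * (R3 A Q B τ)ᵀ := by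
  have h := flow_mul_flow_neg A Q B τ
  rw [flow_eq_fromBlocks A Q B τ, flow_eq_fromBlocks A Q B (-τ),
    Matrix.fromBlocks_multiply] at h
  have h21 := congrArg Matrix.toBlocks₂₁ h
  rw [Matrix.toBlocks_fromBlocks₂₁] at h21
  have h1 : (1 : Matrix (Fin n ⊕ Fin n) (Fin n ⊕ Fin n) ℝ).toBlocks₂₁ = 0 := by
    ext i j; simp [Matrix.toBlocks₂₁, Matrix.one_apply]
  rw [h1] at h21
  have h2 : R3 A Q B (-τ) = -(R3 A Q B τ)ᵀ := by
    rw [R3_transpose A Q B hQ, neg_neg]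
  have h3 : R1 A Q B (-τ) = (R4 A Q B τ)ᵀ := (R4_transpose A Q B hQ τ).symm
  rw [h2, h3, Matrix.mul_neg, ← sub_eq_add_neg, sub_eq_zero] at h21
  exact h21

lemma key_inv (hQ : Q.IsSymm) {τ : ℝ} (hu : IsUnit (R3 A Q B τ)) :
    R2 A Q B τ - R1 A Q B τ * (R3 A Q B τ)⁻¹ * R4 A Q B τ = -(((R3 A Q B τ)⁻¹)ᵀ) := by
  have hd : IsUnit (R3 A Q B τ).det := (Matrix.isUnit_iff_isUnit_det _).mp hu
  have hCl : (R3 A Q B τ)⁻¹ * R3 A Q B τ = 1 := Matrix.nonsing_inv_mul _ hd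
  have hCr : R3 A Q B τ * (R3 A Q B τ)⁻¹ = 1 := Matrix.mul_nonsing_inv _ hd
  have h1 : (R3 A Q B τ)ᵀ * (R1 A Q B τ * (R3 A Q B τ)⁻¹ * R4 A Q B τ - R2 A Q B τ) = 1 := by
    rw [Matrix.mul_sub]
    have h2 : (R3 A Q B τ)ᵀ * (R1 A Q B τ * (R3 A Q B τ)⁻¹ * R4 A Q B τ)
        = (R1 A Q B τ)ᵀ * R4 A Q B τ := by
      calc (R3 A Q B τ)ᵀ * (R1 A Q B τ * (R3 A Q B τ)⁻¹ * R4 A Q B τ)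
          = ((R3 A Q B τ)ᵀ * R1 A Q B τ) * ((R3 A Q B τ)⁻¹ * R4 A Q B τ) := by
            noncomm_ring
        _ = ((R1 A Q B τ)ᵀ * R3 A Q B τ) * ((R3 A Q B τ)⁻¹ * R4 A Q B τ) := by
            rw [← sympl_two A Q B hQ τ]
        _ = (R1 A Q B τ)ᵀ * (R3 A Q B τ * (R3 A Q B τ)⁻¹) * R4 A Q B τ := by
            noncomm_ring
        _ = (R1 A Q B τ)ᵀ * R4 A Q B τ := by rw [hCr, Matrix.mul_one]
    rw [h2]
    exact sympl_one A Q B hQ τ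
  have h3 : ((R3 A Q B τ)ᵀ)⁻¹
      = R1 A Q B τ * (R3 A Q B τ)⁻¹ * R4 A Q B τ - R2 A Q B τ :=
    Matrix.inv_eq_right_inv h1
  rw [Matrix.transpose_nonsing_inv, h3, neg_sub]

lemma R3_neg (hQ : Q.IsSymm) (τ : ℝ) : R3 A Q B (-τ) = -((R3 A Q B τ)ᵀ) := by
  rw [R3_transpose A Q B hQ, neg_neg]

lemma isUnit_R3_neg (hQ : Q.IsSymm) {τ : ℝ} (hu : IsUnit (R3 A Q B τ)) :
    IsUnit (R3 A Q B (-τ)) := by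
  rw [R3_neg A Q B hQ]
  have hd : IsUnit (R3 A Q B τ).det := (Matrix.isUnit_iff_isUnit_det _).mp hu
  rw [Matrix.isUnit_iff_isUnit_det, Matrix.det_neg, Matrix.det_transpose]
  exact (IsUnit.pow _ (isUnit_one.neg)).mul hd

lemma inv_R3_neg (hQ : Q.IsSymm) {τ : ℝ} (hu : IsUnit (R3 A Q B τ)) :
    (R3 A Q B (-τ))⁻¹ = -(((R3 A Q B τ)⁻¹)ᵀ) := by
  have hd : IsUnit (R3 A Q B τ).det := (Matrix.isUnit_iff_isUnit_det _).mp hu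
  apply Matrix.inv_eq_right_inv
  rw [R3_neg A Q B hQ, Matrix.neg_mul, Matrix.mul_neg, neg_neg,
    ← Matrix.transpose_mul, Matrix.nonsing_inv_mul _ hd, Matrix.transpose_one]

lemma group_R3 (τ s : ℝ) :
    R3 A Q B τ = R3 A Q B (τ - s) * R1 A Q B s + R4 A Q B (τ - s) * R3 A Q B s := by
  have h : flow A Q B τ = flow A Q B (τ - s) * flow A Q B s := by
    rw [← flow_add, sub_add_cancel]
  rw [flow_eq_fromBlocks A Q B (τ - s), flow_eq_fromBlocks A Q B s,
    Matrix.fromBlocks_multiply] at h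
  have := congrArg Matrix.toBlocks₂₁ h
  rw [Matrix.toBlocks_fromBlocks₂₁] at this
  exact this

lemma group_R4 (τ s : ℝ) :
    R4 A Q B τ = R3 A Q B (τ - s) * R2 A Q B s + R4 A Q B (τ - s) * R4 A Q B s := by
  have h : flow A Q B τ = flow A Q B (τ - s) * flow A Q B s := by
    rw [← flow_add, sub_add_cancel]
  rw [flow_eq_fromBlocks A Q B (τ - s), flow_eq_fromBlocks A Q B s,
    Matrix.fromBlocks_multiply] at h
  have := congrArg Matrix.toBlocks₂₂ h
  rw [Matrix.toBlocks_fromBlocks₂₂] at this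
  exact this

lemma S_symm (hQ : Q.IsSymm) {τ : ℝ} (hu : IsUnit (R3 A Q B τ)) :
    ((R3 A Q B τ)⁻¹ * R4 A Q B τ)ᵀ = (R3 A Q B τ)⁻¹ * R4 A Q B τ := by
  have hd : IsUnit (R3 A Q B τ).det := (Matrix.isUnit_iff_isUnit_det _).mp hu
  have hdt : IsUnit ((R3 A Q B τ)ᵀ).det := by rwa [Matrix.det_transpose]
  have hCl : (R3 A Q B τ)⁻¹ * R3 A Q B τ = 1 := Matrix.nonsing_inv_mul _ hd
  calc ((R3 A Q B τ)⁻¹ * R4 A Q B τ)ᵀ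
      = (R4 A Q B τ)ᵀ * ((R3 A Q B τ)ᵀ)⁻¹ := by
        rw [Matrix.transpose_mul, Matrix.transpose_nonsing_inv]
    _ = (R3 A Q B τ)⁻¹ * (R3 A Q B τ * (R4 A Q B τ)ᵀ) * ((R3 A Q B τ)ᵀ)⁻¹ := by
        rw [← Matrix.mul_assoc, hCl, Matrix.one_mul]
    _ = (R3 A Q B τ)⁻¹ * (R4 A Q B τ * (R3 A Q B τ)ᵀ) * ((R3 A Q B τ)ᵀ)⁻¹ := by
        rw [sympl_three A Q B hQ]
    _ = (R3 A Q B τ)⁻¹ * R4 A Q B τ := by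
        rw [Matrix.mul_assoc ((R3 A Q B τ)⁻¹), Matrix.mul_assoc,
          Matrix.mul_nonsing_inv _ hdt, Matrix.mul_one]

lemma key_decomp (hQ : Q.IsSymm) {τ s : ℝ} (huτ : IsUnit (R3 A Q B τ))
    (hus : IsUnit (R3 A Q B s)) :
    (R3 A Q B τ)⁻¹ * R4 A Q B τ - (R3 A Q B s)⁻¹ * R4 A Q B s
      = (R3 A Q B τ)⁻¹ * R3 A Q B (τ - s) * (R3 A Q B (-s))⁻¹ := by
  have hdτ : IsUnit (R3 A Q B τ).det := (Matrix.isUnit_iff_isUnit_det _).mp huτ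
  have hds : IsUnit (R3 A Q B s).det := (Matrix.isUnit_iff_isUnit_det _).mp hus
  have hClτ : (R3 A Q B τ)⁻¹ * R3 A Q B τ = 1 := Matrix.nonsing_inv_mul _ hdτ
  have hCrs : R3 A Q B s * (R3 A Q B s)⁻¹ = 1 := Matrix.mul_nonsing_inv _ hds
  have hmain : R3 A Q B τ * ((R3 A Q B τ)⁻¹ * R4 A Q B τ - (R3 A Q B s)⁻¹ * R4 A Q B s)
      = R3 A Q B (τ - s) * (R3 A Q B (-s))⁻¹ := by
    rw [Matrix.mul_sub, ← Matrix.mul_assoc, Matrix.mul_nonsing_inv _ hdτ, Matrix.one_mul]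
    rw [group_R4 A Q B τ s]
    nth_rewrite 1 [group_R3 A Q B τ s]
    have hexp : (R3 A Q B (τ - s) * R1 A Q B s + R4 A Q B (τ - s) * R3 A Q B s)
          * ((R3 A Q B s)⁻¹ * R4 A Q B s)
        = R3 A Q B (τ - s) * (R1 A Q B s * (R3 A Q B s)⁻¹ * R4 A Q B s)
          + R4 A Q B (τ - s) * (R3 A Q B s * (R3 A Q B s)⁻¹) * R4 A Q B s := by
      noncomm_ring
    rw [hexp, hCrs, Matrix.mul_one]
    have : R3 A Q B (τ - s) * R2 A Q B s + R4 A Q B (τ - s) * R4 A Q B s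
          - (R3 A Q B (τ - s) * (R1 A Q B s * (R3 A Q B s)⁻¹ * R4 A Q B s)
            + R4 A Q B (τ - s) * R4 A Q B s)
        = R3 A Q B (τ - s)
          * (R2 A Q B s - R1 A Q B s * (R3 A Q B s)⁻¹ * R4 A Q B s) := by
      noncomm_ring
    rw [this, key_inv A Q B hQ hus, inv_R3_neg A Q B hQ hus, Matrix.mul_neg]
  calc (R3 A Q B τ)⁻¹ * R4 A Q B τ - (R3 A Q B s)⁻¹ * R4 A Q B s
      = (R3 A Q B τ)⁻¹ * (R3 A Q B τ
          * ((R3 A Q B τ)⁻¹ * R4 A Q B τ - (R3 A Q B s)⁻¹ * R4 A Q B s)) := by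
        rw [← Matrix.mul_assoc, hClτ, Matrix.one_mul]
    _ = (R3 A Q B τ)⁻¹ * (R3 A Q B (τ - s) * (R3 A Q B (-s))⁻¹) := by rw [hmain]
    _ = (R3 A Q B τ)⁻¹ * R3 A Q B (τ - s) * (R3 A Q B (-s))⁻¹ := by
        rw [Matrix.mul_assoc]

section Deriv

attribute [local instance] Matrix.linftyOpNormedAddCommGroup Matrix.linftyOpNormedRing
  Matrix.linftyOpNormedAlgebra

lemma OmHam : Om n * Ham A Q B
    = Matrix.fromBlocks Aᵀ Q (-(B * Bᵀ)) (-A) := by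
  rw [Om, Ham, Matrix.fromBlocks_multiply]
  simp

lemma hasDerivAt_flow (τ : ℝ) :
    HasDerivAt (flow A Q B) (-(Om n * Ham A Q B * flow A Q B τ)) τ := by
  letI : CompleteSpace (Matrix (Fin n ⊕ Fin n) (Fin n ⊕ Fin n) ℝ) :=
    FiniteDimensional.complete ℝ _
  have h := hasDerivAt_exp_smul_const' (𝕂 := ℝ) (Om n * Ham A Q B) (-τ)
  have hneg : HasDerivAt (fun t : ℝ => -t) (-1 : ℝ) τ := by
    exact (hasDerivAt_id' τ).neg
  have h2 := HasDerivAt.scomp τ h hneg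
  convert h2 using 1
  · rfl
  · rfl
  · rfl
  · rfl
  · simp [flow]
    rfl

def blockLM21 : Matrix (Fin n ⊕ Fin n) (Fin n ⊕ Fin n) ℝ →ₗ[ℝ] Matrix (Fin n) (Fin n) ℝ where
  toFun := Matrix.toBlocks₂₁
  map_add' := fun _ _ => rfl
  map_smul' := fun _ _ => rfl

def blockLM22 : Matrix (Fin n ⊕ Fin n) (Fin n ⊕ Fin n) ℝ →ₗ[ℝ] Matrix (Fin n) (Fin n) ℝ where
  toFun := Matrix.toBlocks₂₂
  map_add' := fun _ _ => rfl
  map_smul' := fun _ _ => rfl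

lemma hasDerivAt_R3 (τ : ℝ) :
    HasDerivAt (R3 A Q B) (B * Bᵀ * R1 A Q B τ + A * R3 A Q B τ) τ := by
  have h := ((blockLM21 (n := n)).toContinuousLinearMap.hasFDerivAt).comp_hasDerivAt τ
    (hasDerivAt_flow A Q B τ)
  have heq : (blockLM21 (n := n)).toContinuousLinearMap (-(Om n * Ham A Q B * flow A Q B τ))
      = B * Bᵀ * R1 A Q B τ + A * R3 A Q B τ := by
    show Matrix.toBlocks₂₁ (-(Om n * Ham A Q B * flow A Q B τ)) = _
    rw [OmHam, flow_eq_fromBlocks, Matrix.fromBlocks_multiply]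
    have : Matrix.toBlocks₂₁ (-(Matrix.fromBlocks
        (Aᵀ * R1 A Q B τ + Q * R3 A Q B τ) (Aᵀ * R2 A Q B τ + Q * R4 A Q B τ)
        (-(B * Bᵀ) * R1 A Q B τ + -A * R3 A Q B τ)
        (-(B * Bᵀ) * R2 A Q B τ + -A * R4 A Q B τ))) =
        -((-(B * Bᵀ) * R1 A Q B τ + -A * R3 A Q B τ)) := rfl
    rw [this]
    noncomm_ring
  convert h using 1
  · rfl
  · rfl
  · rfl
  · rfl
  · exact heq.symm

lemma hasDerivAt_R4 (τ : ℝ) :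
    HasDerivAt (R4 A Q B) (B * Bᵀ * R2 A Q B τ + A * R4 A Q B τ) τ := by
  have h := ((blockLM22 (n := n)).toContinuousLinearMap.hasFDerivAt).comp_hasDerivAt τ
    (hasDerivAt_flow A Q B τ)
  have heq : (blockLM22 (n := n)).toContinuousLinearMap (-(Om n * Ham A Q B * flow A Q B τ))
      = B * Bᵀ * R2 A Q B τ + A * R4 A Q B τ := by
    show Matrix.toBlocks₂₂ (-(Om n * Ham A Q B * flow A Q B τ)) = _
    rw [OmHam, flow_eq_fromBlocks, Matrix.fromBlocks_multiply]
    have : Matrix.toBlocks₂₂ (-(Matrix.fromBlocks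
        (Aᵀ * R1 A Q B τ + Q * R3 A Q B τ) (Aᵀ * R2 A Q B τ + Q * R4 A Q B τ)
        (-(B * Bᵀ) * R1 A Q B τ + -A * R3 A Q B τ)
        (-(B * Bᵀ) * R2 A Q B τ + -A * R4 A Q B τ))) =
        -((-(B * Bᵀ) * R2 A Q B τ + -A * R4 A Q B τ)) := rfl
    rw [this]
    noncomm_ring
  convert h using 1
  · rfl
  · rfl
  · rfl
  · rfl
  · exact heq.symm

lemma hasDerivAt_S (hQ : Q.IsSymm) {r : ℝ} (hu : IsUnit (R3 A Q B r)) :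
    HasDerivAt (fun t => (R3 A Q B t)⁻¹ * R4 A Q B t)
      (-((R3 A Q B r)⁻¹ * (B * Bᵀ) * ((R3 A Q B r)⁻¹)ᵀ)) r := by
  letI : CompleteSpace (Matrix (Fin n) (Fin n) ℝ) := FiniteDimensional.complete ℝ _
  have hd : IsUnit (R3 A Q B r).det := (Matrix.isUnit_iff_isUnit_det _).mp hu
  have hCl : (R3 A Q B r)⁻¹ * R3 A Q B r = 1 := Matrix.nonsing_inv_mul _ hd
  have hCr : R3 A Q B r * (R3 A Q B r)⁻¹ = 1 := Matrix.mul_nonsing_inv _ hd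
  set u : (Matrix (Fin n) (Fin n) ℝ)ˣ := hu.unit with hu'
  have hinv : HasDerivAt (fun t => (R3 A Q B t)⁻¹)
      (-((R3 A Q B r)⁻¹ * (B * Bᵀ * R1 A Q B r + A * R3 A Q B r) * (R3 A Q B r)⁻¹)) r := by
    have hfd := hasFDerivAt_ringInverse (𝕜 := ℝ) u
    have hcoe : (u : Matrix (Fin n) (Fin n) ℝ) = R3 A Q B r := hu.unit_spec
    have hcoeinv : ((u⁻¹ : (Matrix (Fin n) (Fin n) ℝ)ˣ) : Matrix (Fin n) (Fin n) ℝ) = (R3 A Q B r)⁻¹ := by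
      rw [← hcoe, ← Matrix.coe_units_inv]
    rw [hcoe] at hfd
    have hcomp := hfd.comp_hasDerivAt r (hasDerivAt_R3 A Q B r)
    have : (fun t => Ring.inverse (R3 A Q B t)) = fun t => (R3 A Q B t)⁻¹ := by
      funext t; rw [Matrix.nonsing_inv_eq_ringInverse]
    have hcomp2 : HasDerivAt (fun t => (R3 A Q B t)⁻¹)
        ((-((ContinuousLinearMap.mulLeftRight ℝ (Matrix (Fin n) (Fin n) ℝ)) ↑u⁻¹) ↑u⁻¹)
          (B * Bᵀ * R1 A Q B r + A * R3 A Q B r)) r := by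
      rw [← this]; exact hcomp
    convert hcomp2 using 1
    simp [hcoeinv]
  have h := hinv.mul (hasDerivAt_R4 A Q B r)
  convert h using 1
  · rfl
  · rfl
  · rfl
  · rfl
  have hR4eq : R4 A Q B r = R3 A Q B r * ((R3 A Q B r)⁻¹ * R4 A Q B r) := by
    rw [← Matrix.mul_assoc, hCr, Matrix.one_mul]
  have hkey := key_inv A Q B hQ hu
  calc -((R3 A Q B r)⁻¹ * (B * Bᵀ) * ((R3 A Q B r)⁻¹)ᵀ)
      = (R3 A Q B r)⁻¹ * (B * Bᵀ) * (R2 A Q B r - R1 A Q B r * (R3 A Q B r)⁻¹ * R4 A Q B r) := by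
        rw [hkey]; noncomm_ring
    _ = -((R3 A Q B r)⁻¹ * (B * Bᵀ * R1 A Q B r + A * R3 A Q B r) * (R3 A Q B r)⁻¹) * R4 A Q B r
        + (R3 A Q B r)⁻¹ * (B * Bᵀ * R2 A Q B r + A * R4 A Q B r) := by
        have expand : -((R3 A Q B r)⁻¹ * (B * Bᵀ * R1 A Q B r + A * R3 A Q B r) * (R3 A Q B r)⁻¹) * R4 A Q B r
            + (R3 A Q B r)⁻¹ * (B * Bᵀ * R2 A Q B r + A * R4 A Q B r)
            = (R3 A Q B r)⁻¹ * (B * Bᵀ) * (R2 A Q B r - R1 A Q B r * ((R3 A Q B r)⁻¹ * R4 A Q B r))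
              + ((R3 A Q B r)⁻¹ * A) * (R4 A Q B r - (R3 A Q B r * (R3 A Q B r)⁻¹) * R4 A Q B r) := by
          noncomm_ring
        rw [expand, hCr, Matrix.one_mul, sub_self, Matrix.mul_zero, add_zero,
          ← Matrix.mul_assoc]
        noncomm_ring
  
lemma S_diff_psd (hQ : Q.IsSymm) {T τ s : ℝ}
    (hR3 : ∀ r ∈ Set.Ioc (0:ℝ) T, IsUnit (R3 A Q B r))
    (hτ : 0 < τ) (hτs : τ ≤ s) (hsT : s ≤ T) :
    ((R3 A Q B τ)⁻¹ * R4 A Q B τ - (R3 A Q B s)⁻¹ * R4 A Q B s).PosSemidef := by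
  have hmem : ∀ r : ℝ, r ∈ Set.Icc τ s → IsUnit (R3 A Q B r) := by
    intro r hr
    exact hR3 r ⟨lt_of_lt_of_le hτ hr.1, le_trans hr.2 hsT⟩
  refine Matrix.PosSemidef.of_dotProduct_mulVec_nonneg ?_ ?_
  · -- Hermitian
    have h1 := S_symm A Q B hQ (hmem τ ⟨le_refl τ, hτs⟩)
    have h2 := S_symm A Q B hQ (hmem s ⟨hτs, le_refl s⟩)
    show _ᴴ = _
    rw [Matrix.conjTranspose_eq_transpose_of_trivial, Matrix.transpose_sub, h1, h2]
  · intro x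
    set g : ℝ → ℝ := fun r => x ⬝ᵥ ((R3 A Q B r)⁻¹ * R4 A Q B r) *ᵥ x with hg
    let φ : Matrix (Fin n) (Fin n) ℝ →ₗ[ℝ] ℝ :=
      { toFun := fun M => x ⬝ᵥ M *ᵥ x
        map_add' := by intro M N; simp [Matrix.add_mulVec, dotProduct_add]
        map_smul' := by intro c M; simp [Matrix.smul_mulVec, dotProduct_smul] }
    have hder : ∀ r ∈ Set.Icc τ s, HasDerivAt g
        (x ⬝ᵥ (-((R3 A Q B r)⁻¹ * (B * Bᵀ) * ((R3 A Q B r)⁻¹)ᵀ)) *ᵥ x) r := by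
      intro r hr
      have h := (φ.toContinuousLinearMap.hasFDerivAt).comp_hasDerivAt r
        (hasDerivAt_S A Q B hQ (hmem r hr))
      exact h
    have hnonpos : ∀ r : ℝ,
        x ⬝ᵥ (-((R3 A Q B r)⁻¹ * (B * Bᵀ) * ((R3 A Q B r)⁻¹)ᵀ)) *ᵥ x ≤ 0 := by
      intro r
      have hfact : (R3 A Q B r)⁻¹ * (B * Bᵀ) * ((R3 A Q B r)⁻¹)ᵀ
          = ((R3 A Q B r)⁻¹ * B) * ((R3 A Q B r)⁻¹ * B)ᵀ := by
        rw [Matrix.transpose_mul, ← Matrix.mul_assoc, ← Matrix.mul_assoc, Matrix.mul_assoc]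
      rw [hfact]
      set D := (R3 A Q B r)⁻¹ * B with hD
      have : x ⬝ᵥ (-(D * Dᵀ)) *ᵥ x = -((Dᵀ *ᵥ x) ⬝ᵥ (Dᵀ *ᵥ x)) := by
        rw [Matrix.neg_mulVec, dotProduct_neg, ← Matrix.mulVec_mulVec,
          Matrix.dotProduct_mulVec, ← Matrix.mulVec_transpose]
      rw [this, neg_nonpos]
      exact Finset.sum_nonneg fun i _ => mul_self_nonneg _
    have hant : AntitoneOn g (Set.Icc τ s) := by
      apply antitoneOn_of_deriv_nonpos (convex_Icc τ s)
      · intro r hr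
        exact (hder r hr).continuousAt.continuousWithinAt
      · intro r hr
        rw [interior_Icc] at hr
        exact ((hder r (Set.mem_Icc_of_Ioo hr)).differentiableAt).differentiableWithinAt
      · intro r hr
        rw [interior_Icc] at hr
        rw [(hder r (Set.mem_Icc_of_Ioo hr)).deriv]
        exact hnonpos r
    have hgs : g s ≤ g τ := hant ⟨le_refl τ, hτs⟩ ⟨hτs, le_refl s⟩ hτs
    have : x ⬝ᵥ ((R3 A Q B τ)⁻¹ * R4 A Q B τ - (R3 A Q B s)⁻¹ * R4 A Q B s) *ᵥ x
        = g τ - g s := by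
      rw [Matrix.sub_mulVec, dotProduct_sub]
    simp only [star_trivial]
    rw [this]
    linarith

end Deriv

lemma det_R3_neg (hQ : Q.IsSymm) (r : ℝ) :
    (R3 A Q B (-r)).det = (-1:ℝ)^n * (R3 A Q B r).det := by
  rw [R3_neg A Q B hQ, Matrix.det_neg, Matrix.det_transpose, Fintype.card_fin]

lemma det_R3_pos (hQ : Q.IsSymm) {T : ℝ}
    (hR3 : ∀ r ∈ Set.Ioc (0:ℝ) T, IsUnit (R3 A Q B r))
    {s : ℝ} (hs : s ∈ Set.Ioc (0:ℝ) T) : 0 < (R3 A Q B s).det := by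
  obtain ⟨hs0, hsT⟩ := hs
  have hhalf : s/2 ∈ Set.Ioc (0:ℝ) T := ⟨by linarith, by linarith⟩
  have huh : IsUnit (R3 A Q B (s/2)) := hR3 _ hhalf
  have hus : IsUnit (R3 A Q B s) := hR3 _ ⟨hs0, hsT⟩
  have hdh : (R3 A Q B (s/2)).det ≠ 0 := by
    intro h
    exact ((Matrix.isUnit_iff_isUnit_det _).mp huh).ne_zero h
  have hds : (R3 A Q B s).det ≠ 0 := by
    intro h
    exact ((Matrix.isUnit_iff_isUnit_det _).mp hus).ne_zero h
  have hD := S_diff_psd A Q B hQ hR3 hhalf.1 (by linarith : s/2 ≤ s) hsT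
  have hkey := key_decomp A Q B hQ huh hus
  have hdet := psd_det_nonneg hD
  rw [hkey] at hdet
  have hsub : s/2 - s = -(s/2) := by ring
  rw [hsub] at hdet
  rw [Matrix.det_mul, Matrix.det_mul, Matrix.det_nonsing_inv, Matrix.det_nonsing_inv,
    det_R3_neg A Q B hQ, det_R3_neg A Q B hQ, Ring.inverse_eq_inv'] at hdet
  have hpow : ((-1:ℝ)^n) * ((-1:ℝ)^n) = 1 := by
    rw [← pow_add]
    exact (neg_one_pow_eq_one_iff_even (by norm_num)).mpr (Even.add_self n)
  have hval : ((R3 A Q B (s/2)).det)⁻¹ * ((-1:ℝ)^n * (R3 A Q B (s/2)).det)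
      * ((-1:ℝ)^n * (R3 A Q B s).det)⁻¹ = ((R3 A Q B s).det)⁻¹ := by
    have hne : ((-1:ℝ)^n) ≠ 0 := by
      intro h
      have := hpow
      rw [h] at this; norm_num at this
    field_simp
  rw [hval] at hdet
  have : ((R3 A Q B s).det)⁻¹ ≠ 0 := inv_ne_zero hds
  have hinvpos : 0 < ((R3 A Q B s).det)⁻¹ := lt_of_le_of_ne hdet (Ne.symm this)
  exact inv_pos.mp hinvpos

/-- Main Jacobian estimate: for `N(τ) = R₃(τ)Hψ + R₄(τ)` with `Hψ` symmetric and
`Hψ + R₃(s)⁻¹R₄(s) ⪰ 0` on `(0,T]`, the `n`-th roots of the determinants satisfy the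
concavity-type estimate, the two terms on the right-hand side are nonnegative (the first
strictly positive for `τ < s`), and `det N(τ) > 0` for `τ ∈ [0,T)`. -/
theorem main_jacobian_estimate
    {n m : ℕ} (hm : 1 ≤ m) (hmn : m ≤ n)
    (A Q : Matrix (Fin n) (Fin n) ℝ) (B : Matrix (Fin n) (Fin m) ℝ)
    (hQ : Q.IsSymm) (hB : B.rank = m)
    (T : ℝ) (hT : 0 < T) (hKal : Kalman A B)
    (hR3 : ∀ τ ∈ Set.Ioc 0 T, IsUnit (R3 A Q B τ))
    (Hψ : Matrix (Fin n) (Fin n) ℝ) (hHψ : Hψ.IsSymm)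
    (hpos : ∀ s ∈ Set.Ioc (0:ℝ) T, (Hψ + (R3 A Q B s)⁻¹ * R4 A Q B s).PosSemidef) :
    letI N : ℝ → Matrix (Fin n) (Fin n) ℝ := fun τ => R3 A Q B τ * Hψ + R4 A Q B τ
    (∀ τ s : ℝ, 0 ≤ τ → τ ≤ s → s ≤ T → 0 < s →
      ((N τ).det ^ ((1:ℝ)/(n:ℝ)) ≥
        ((R3 A Q B (τ - s)).det / (R3 A Q B (-s)).det) ^ ((1:ℝ)/(n:ℝ)) +
        ((R3 A Q B τ).det / (R3 A Q B s).det) ^ ((1:ℝ)/(n:ℝ)) *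
          (N s).det ^ ((1:ℝ)/(n:ℝ))) ∧
      0 ≤ ((R3 A Q B (τ - s)).det / (R3 A Q B (-s)).det) ^ ((1:ℝ)/(n:ℝ)) ∧
      0 ≤ ((R3 A Q B τ).det / (R3 A Q B s).det) ^ ((1:ℝ)/(n:ℝ)) *
            (N s).det ^ ((1:ℝ)/(n:ℝ)) ∧
      (τ < s → 0 < ((R3 A Q B (τ - s)).det / (R3 A Q B (-s)).det) ^ ((1:ℝ)/(n:ℝ)))) ∧
    (∀ τ ∈ Set.Ico (0:ℝ) T, 0 < (N τ).det) := by
  set N : ℝ → Matrix (Fin n) (Fin n) ℝ := fun τ => R3 A Q B τ * Hψ + R4 A Q B τ with hN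
  have hn : 0 < n := lt_of_lt_of_le hm hmn
  have hexp : (1:ℝ)/(n:ℝ) ≠ 0 := by
    have : (0:ℝ) < n := Nat.cast_pos.mpr hn
    positivity
  -- basic facts
  have hNone : N 0 = 1 := by
    show R3 A Q B 0 * Hψ + R4 A Q B 0 = 1
    rw [R3_zero, R4_zero, Matrix.zero_mul, zero_add]
  have hNfac : ∀ r : ℝ, IsUnit (R3 A Q B r) →
      N r = R3 A Q B r * (Hψ + (R3 A Q B r)⁻¹ * R4 A Q B r) := by
    intro r hu
    have hd : IsUnit (R3 A Q B r).det := (Matrix.isUnit_iff_isUnit_det _).mp hu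
    show R3 A Q B r * Hψ + R4 A Q B r = _
    rw [Matrix.mul_add, ← Matrix.mul_assoc, Matrix.mul_nonsing_inv _ hd, Matrix.one_mul]
  have hdetN : ∀ r : ℝ, r ∈ Set.Ioc (0:ℝ) T →
      (N r).det = (R3 A Q B r).det * (Hψ + (R3 A Q B r)⁻¹ * R4 A Q B r).det := by
    intro r hr
    rw [hNfac r (hR3 r hr), Matrix.det_mul]
  have hdetNnn : ∀ r : ℝ, r ∈ Set.Ioc (0:ℝ) T → 0 ≤ (N r).det := by
    intro r hr
    rw [hdetN r hr]
    exact mul_nonneg (det_R3_pos A Q B hQ hR3 hr).le (psd_det_nonneg (hpos r hr))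
  -- the main statement for 0 < τ
  constructor
  · intro τ s hτ0 hτs hsT hs0
    have hsmem : s ∈ Set.Ioc (0:ℝ) T := ⟨hs0, hsT⟩
    have hus : IsUnit (R3 A Q B s) := hR3 s hsmem
    have hdspos : 0 < (R3 A Q B s).det := det_R3_pos A Q B hQ hR3 hsmem
    have hdnegs : (R3 A Q B (-s)).det = (-1:ℝ)^n * (R3 A Q B s).det :=
      det_R3_neg A Q B hQ s
    have hdnegs_ne : (R3 A Q B (-s)).det ≠ 0 := by
      rw [hdnegs]
      exact mul_ne_zero (pow_ne_zero _ (by norm_num)) hdspos.ne'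
    rcases eq_or_lt_of_le hτ0 with hτz | hτpos
    · -- τ = 0
      subst hτz
      have h1 : (R3 A Q B (0 - s)).det / (R3 A Q B (-s)).det = 1 := by
        rw [zero_sub, div_self hdnegs_ne]
      have h2 : (R3 A Q B 0).det = 0 := by
        letI := Fin.pos_iff_nonempty.mp hn; rw [R3_zero, Matrix.det_zero]
      refine ⟨?_, ?_, ?_, ?_⟩
      · rw [hNone, Matrix.det_one, Real.one_rpow, h1, Real.one_rpow, h2, zero_div,
          Real.zero_rpow hexp, zero_mul, add_zero]
      · rw [h1, Real.one_rpow]; norm_num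
      · rw [h2, zero_div, Real.zero_rpow hexp, zero_mul]
      · intro _
        rw [h1, Real.one_rpow]; norm_num
    · -- 0 < τ
      have hτmem : τ ∈ Set.Ioc (0:ℝ) T := ⟨hτpos, le_trans hτs hsT⟩
      have huτ : IsUnit (R3 A Q B τ) := hR3 τ hτmem
      have hdτpos : 0 < (R3 A Q B τ).det := det_R3_pos A Q B hQ hR3 hτmem
      set D := (R3 A Q B τ)⁻¹ * R4 A Q B τ - (R3 A Q B s)⁻¹ * R4 A Q B s with hDdef
      set P := Hψ + (R3 A Q B s)⁻¹ * R4 A Q B s with hPdef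
      have hD : D.PosSemidef := S_diff_psd A Q B hQ hR3 hτpos hτs hsT
      have hP : P.PosSemidef := hpos s hsmem
      have hkey := key_decomp A Q B hQ huτ hus
      have hdetD : D.det = ((R3 A Q B τ).det)⁻¹ * (R3 A Q B (τ - s)).det
          * ((R3 A Q B (-s)).det)⁻¹ := by
        rw [hDdef, hkey, Matrix.det_mul, Matrix.det_mul, Matrix.det_nonsing_inv,
          Matrix.det_nonsing_inv, Ring.inverse_eq_inv']
      have hbase1 : (R3 A Q B (τ - s)).det / (R3 A Q B (-s)).det
          = (R3 A Q B τ).det * D.det := by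
        rw [hdetD]
        field_simp
      have hbase1nn : 0 ≤ (R3 A Q B (τ - s)).det / (R3 A Q B (-s)).det := by
        rw [hbase1]
        exact mul_nonneg hdτpos.le (psd_det_nonneg hD)
      have hsum : Hψ + (R3 A Q B τ)⁻¹ * R4 A Q B τ = D + P := by
        rw [hDdef, hPdef]; abel
      have hmink := minkowski_det hn hD hP
      have hNτ : (N τ).det = (R3 A Q B τ).det * (D + P).det := by
        rw [hdetN τ hτmem, hsum]
      have hNs : (N s).det = (R3 A Q B s).det * P.det := by
        rw [hdetN s hsmem, hPdef]
      have hbase2 : (R3 A Q B τ).det / (R3 A Q B s).det * (N s).det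
          = (R3 A Q B τ).det * P.det := by
        rw [hNs]
        field_simp
      have hratio_pos : 0 < (R3 A Q B τ).det / (R3 A Q B s).det :=
        div_pos hdτpos hdspos
      refine ⟨?_, ?_, ?_, ?_⟩
      · -- main inequality
        have hstep : (R3 A Q B τ).det ^ ((1:ℝ)/(n:ℝ)) * (D.det ^ ((1:ℝ)/(n:ℝ))
              + P.det ^ ((1:ℝ)/(n:ℝ)))
            ≤ (R3 A Q B τ).det ^ ((1:ℝ)/(n:ℝ)) * (D + P).det ^ ((1:ℝ)/(n:ℝ)) :=
          mul_le_mul_of_nonneg_left hmink (Real.rpow_nonneg hdτpos.le _)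
        have hL : (N τ).det ^ ((1:ℝ)/(n:ℝ))
            = (R3 A Q B τ).det ^ ((1:ℝ)/(n:ℝ)) * (D + P).det ^ ((1:ℝ)/(n:ℝ)) := by
          rw [hNτ, Real.mul_rpow hdτpos.le (psd_det_nonneg (hD.add hP))]
        have hR1 : ((R3 A Q B (τ - s)).det / (R3 A Q B (-s)).det) ^ ((1:ℝ)/(n:ℝ))
            = (R3 A Q B τ).det ^ ((1:ℝ)/(n:ℝ)) * D.det ^ ((1:ℝ)/(n:ℝ)) := by
          rw [hbase1, Real.mul_rpow hdτpos.le (psd_det_nonneg hD)]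
        have hR2 : ((R3 A Q B τ).det / (R3 A Q B s).det) ^ ((1:ℝ)/(n:ℝ))
              * (N s).det ^ ((1:ℝ)/(n:ℝ))
            = (R3 A Q B τ).det ^ ((1:ℝ)/(n:ℝ)) * P.det ^ ((1:ℝ)/(n:ℝ)) := by
          rw [← Real.mul_rpow hratio_pos.le (hdetNnn s hsmem), hbase2,
            Real.mul_rpow hdτpos.le (psd_det_nonneg hP)]
        rw [ge_iff_le, hL, hR1, hR2, ← mul_add]
        exact hstep
      · exact Real.rpow_nonneg hbase1nn _
      · exact mul_nonneg (Real.rpow_nonneg hratio_pos.le _)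
          (Real.rpow_nonneg (hdetNnn s hsmem) _)
      · intro hτlts
        apply Real.rpow_pos_of_pos
        have hst : s - τ ∈ Set.Ioc (0:ℝ) T := ⟨by linarith, by linarith⟩
        have huts : IsUnit (R3 A Q B (s - τ)) := hR3 _ hst
        have hdts : 0 < (R3 A Q B (s - τ)).det := det_R3_pos A Q B hQ hR3 hst
        have hτs' : τ - s = -(s - τ) := by ring
        rw [hτs', det_R3_neg A Q B hQ, hdnegs,
          mul_div_mul_left _ _ (pow_ne_zero n (by norm_num : (-1:ℝ) ≠ 0))]
        exact div_pos hdts hdspos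
  · -- positivity of det N on [0, T)
    rintro τ ⟨hτ0, hτT⟩
    rcases eq_or_lt_of_le hτ0 with hτz | hτpos
    · subst hτz
      rw [hNone, Matrix.det_one]
      norm_num
    · have hτmem : τ ∈ Set.Ioc (0:ℝ) T := ⟨hτpos, hτT.le⟩
      have huτ : IsUnit (R3 A Q B τ) := hR3 τ hτmem
      have hus : IsUnit (R3 A Q B T) := hR3 T ⟨hT, le_refl T⟩
      set D := (R3 A Q B τ)⁻¹ * R4 A Q B τ - (R3 A Q B T)⁻¹ * R4 A Q B T with hDdef
      set P := Hψ + (R3 A Q B T)⁻¹ * R4 A Q B T with hPdef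
      have hD : D.PosSemidef := S_diff_psd A Q B hQ hR3 hτpos hτT.le (le_refl T)
      have hP : P.PosSemidef := hpos T ⟨hT, le_refl T⟩
      have hkey := key_decomp A Q B hQ huτ hus
      have hdetD_ne : D.det ≠ 0 := by
        rw [hDdef, hkey]
        have hst : T - τ ∈ Set.Ioc (0:ℝ) T := ⟨by linarith, by linarith⟩
        have h1 : IsUnit (R3 A Q B (τ - T)) := by
          have : τ - T = -(T - τ) := by ring
          rw [this]
          exact isUnit_R3_neg A Q B hQ (hR3 _ hst)
        have h2 : IsUnit (R3 A Q B (-T)) := isUnit_R3_neg A Q B hQ hus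
        rw [Matrix.det_mul, Matrix.det_mul, Matrix.det_nonsing_inv, Matrix.det_nonsing_inv,
          Ring.inverse_eq_inv']
        have d1 : (R3 A Q B τ).det ≠ 0 :=
          ((Matrix.isUnit_iff_isUnit_det _).mp huτ).ne_zero
        have d2 : (R3 A Q B (τ - T)).det ≠ 0 :=
          ((Matrix.isUnit_iff_isUnit_det _).mp h1).ne_zero
        have d3 : (R3 A Q B (-T)).det ≠ 0 :=
          ((Matrix.isUnit_iff_isUnit_det _).mp h2).ne_zero
        exact mul_ne_zero (mul_ne_zero (inv_ne_zero d1) d2) (inv_ne_zero d3)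
      have hDPD : D.PosDef := by
        refine Matrix.posDef_iff_dotProduct_mulVec.mpr ⟨hD.1, fun x hx => ?_⟩
        rcases (hD.dotProduct_mulVec_nonneg x).eq_or_lt with h | h
        · exfalso
          have hDx : D *ᵥ x = 0 := (hD.dotProduct_mulVec_zero_iff x).mp h.symm
          have : D.det = 0 := Matrix.exists_mulVec_eq_zero_iff.mp ⟨x, hx, hDx⟩
          exact hdetD_ne this
        · exact h
      have hsum : Hψ + (R3 A Q B τ)⁻¹ * R4 A Q B τ = D + P := by
        rw [hDdef, hPdef]; abel
      rw [hdetN τ hτmem, hsum]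
      exact mul_pos (det_R3_pos A Q B hQ hR3 hτmem) (hDPD.add_posSemidef hP).det_pos

end LQ
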